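/- Suppose the graph defined by the nonnegative symmetric weight matrix W (zero diagonal) is connected, and suppose there exist x⋆ and y_1⋆,…,y_J⋆ such that (x⋆, y_j⋆) minimizes f_j for every j∈[J]. Then min_z g(z) = min_{x,y} f(x,y) where f(x,y) = Σ_j f_j(x, y_j), and g attains its global minimum only at points z with x^1 = x^2 = ⋯ = x^J. -/

import Mathlib

/-- Suppose the graph of the nonnegative symmetric weight matrix `W`
(zero diagonal) is connected, and there exist `x⋆` and `y_1⋆,…,y_J⋆` such that `(x⋆, y_j⋆)`
minimizes `f_j` for every `j`.  Then `min_z g(z) = min_{x,y} f(x,y)` where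
`f(x,y) = Σ_j f_j(x,y_j)`, and `g` attains its global minimum only at consensus points
`x^1 = ⋯ = x^J`. -/
theorem dgd_min_g_eq_min_f
    (J n : ℕ) (m : Fin J → ℕ)
    (f : ∀ j : Fin J,
      WithLp 2 (EuclideanSpace ℝ (Fin n) × EuclideanSpace ℝ (Fin (m j))) → ℝ)
    (W : Fin J → Fin J → ℝ)
    (hWsymm : ∀ i j, W i j = W j i)
    (hWnonneg : ∀ i j, 0 ≤ W i j)
    (hWdiag : ∀ j, W j j = 0)
    -- connectivity: any two nodes are joined by a path of positive-weight edges
    (hconn : ∀ i j : Fin J, Relation.ReflTransGen (fun a b => 0 < W a b) i j)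
    (xstar : EuclideanSpace ℝ (Fin n))
    (ystar : ∀ j : Fin J, EuclideanSpace ℝ (Fin (m j)))
    (hmin : ∀ j, ∀ u v, f j ((WithLp.equiv 2 _).symm (xstar, ystar j)) ≤
        f j ((WithLp.equiv 2 _).symm (u, v)))
    (g : WithLp 2 ((PiLp 2 fun _ : Fin J => EuclideanSpace ℝ (Fin n)) ×
          (PiLp 2 fun j : Fin J => EuclideanSpace ℝ (Fin (m j)))) → ℝ)
    (hg : ∀ z, g z = ∑ j, (f j ((WithLp.equiv 2 _).symm (z.ofLp.1 j, z.ofLp.2 j))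
          + ∑ i, W j i * ‖z.ofLp.1 j - z.ofLp.1 i‖ ^ 2)) :
    -- `Σ_j f_j(x⋆, y_j⋆)` is the least value of both f and g, and g attains it only
    -- on the consensus subspace
    IsLeast (Set.range fun p : EuclideanSpace ℝ (Fin n) ×
        (∀ j : Fin J, EuclideanSpace ℝ (Fin (m j))) =>
        ∑ j, f j ((WithLp.equiv 2 _).symm (p.1, p.2 j)))
      (∑ j, f j ((WithLp.equiv 2 _).symm (xstar, ystar j))) ∧
    IsLeast (Set.range g) (∑ j, f j ((WithLp.equiv 2 _).symm (xstar, ystar j))) ∧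
    (∀ z, g z = (∑ j, f j ((WithLp.equiv 2 _).symm (xstar, ystar j))) →
      ∀ i j, z.ofLp.1 i = z.ofLp.1 j) := by

  set c : Fin J → ℝ := fun j => f j ((WithLp.equiv 2 _).symm (xstar, ystar j)) with hc
  have key : ∀ z : WithLp 2 ((PiLp 2 fun _ : Fin J => EuclideanSpace ℝ (Fin n)) ×
      (PiLp 2 fun j : Fin J => EuclideanSpace ℝ (Fin (m j)))), ∀ j : Fin J, c j ≤ f j ((WithLp.equiv 2 _).symm (z.ofLp.1 j, z.ofLp.2 j)) ∧
      0 ≤ ∑ i, W j i * ‖z.ofLp.1 j - z.ofLp.1 i‖ ^ 2 := by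
    intro z j
    refine ⟨hmin j _ _, Finset.sum_nonneg fun i _ =>
      mul_nonneg (hWnonneg j i) (by positivity)⟩
  have hglb : ∀ z, (∑ j, c j) ≤ g z := by
    intro z
    rw [hg]
    refine Finset.sum_le_sum fun j _ => ?_
    have := key z j
    linarith [this.1, this.2]
  refine ⟨⟨⟨(xstar, ystar), rfl⟩, ?_⟩, ⟨⟨((WithLp.equiv 2 _).symm
      (WithLp.toLp 2 (fun _ => xstar : Fin J → EuclideanSpace ℝ (Fin n)), WithLp.toLp 2 ystar)), ?_⟩, ?_⟩, ?_⟩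
  · rintro v ⟨p, rfl⟩
    exact Finset.sum_le_sum fun j _ => hmin j _ _
  · rw [hg]
    simp [sub_self, hc]
  · rintro v ⟨z, rfl⟩
    exact hglb z
  · intro z hz i j
    -- each penalty term is zero
    have hsumpen : (∑ j, ∑ i, W j i * ‖z.ofLp.1 j - z.ofLp.1 i‖ ^ 2) = 0 := by
      have h1 : (∑ j, c j) ≤ ∑ j, f j ((WithLp.equiv 2 _).symm (z.ofLp.1 j, z.ofLp.2 j)) :=
        Finset.sum_le_sum fun j _ => (key z j).1
      have h2 := hg z
      rw [hz, Finset.sum_add_distrib] at h2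
      have h3 : 0 ≤ ∑ j, ∑ i, W j i * ‖z.ofLp.1 j - z.ofLp.1 i‖ ^ 2 :=
        Finset.sum_nonneg fun j _ => (key z j).2
      linarith
    have hpen : ∀ a b : Fin J, W a b * ‖z.ofLp.1 a - z.ofLp.1 b‖ ^ 2 = 0 := by
      intro a b
      have h1 : ∀ j ∈ Finset.univ, (∑ i, W j i * ‖z.ofLp.1 j - z.ofLp.1 i‖ ^ 2) = 0 :=
        (Finset.sum_eq_zero_iff_of_nonneg fun j _ => (key z j).2).mp hsumpen
      have h2 := (Finset.sum_eq_zero_iff_of_nonneg fun i _ =>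
        mul_nonneg (hWnonneg a i) (by positivity)).mp (h1 a (Finset.mem_univ a))
      exact h2 b (Finset.mem_univ b)
    have hstep : ∀ a b : Fin J, 0 < W a b → z.ofLp.1 a = z.ofLp.1 b := by
      intro a b hab
      have := hpen a b
      rcases mul_eq_zero.mp this with h | h
      · exact absurd h (ne_of_gt hab)
      · have : ‖z.ofLp.1 a - z.ofLp.1 b‖ = 0 := by
          have := pow_eq_zero_iff (n := 2) (by norm_num) |>.mp h
          exact this
        have := norm_eq_zero.mp this
        exact sub_eq_zero.mp this
    have := hconn i j
    induction this with
    | refl => rfl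
    | tail _ hbc ih => exact ih.trans (hstep _ _ hbc)
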